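/- Let n ≥ 1, let H be an n×n real symmetric positive definite matrix, let ξ ∈ ℝⁿ, and let I₊, I₀ ⊆ {1,…,n} be disjoint subsets. For each subset S ⊆ I₀ with I₊ ∪ S ≠ {1,…,n}, let h_S denote the unique minimizer of h ↦ ‖h + H⁻¹ξ‖_H² over the subspace {h ∈ ℝⁿ : h_i = 0 for all i ∈ I₊ ∪ S} and let Q_S be the corresponding minimum value (with the convention h_S = 0 when I₊ ∪ S = {1,…,n}). Call S feasible if (h_S)_i ≤ 0 for all i ∈ I₀. Then there exists a feasible S* ⊆ I₀ with Q_{S*} ≤ Q_S for every feasible S ⊆ I₀, and for any such S*, h_{S*} is the unique minimizer of h ↦ ‖h + H⁻¹ξ‖_H² over the cone {h ∈ ℝⁿ : h_i = 0 for all i ∈ I₊, and h_i ≤ 0 for all i ∈ I₀}. -/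

import Mathlib

open Matrix

/-- Squared `H`-norm: `‖a‖_H² = aᵀ H a`. -/
def normHsq {n : ℕ} (H : Matrix (Fin n) (Fin n) ℝ) (a : Fin n → ℝ) : ℝ :=
  a ⬝ᵥ H.mulVec a

namespace Stmt6Aux

variable {n : ℕ} {H : Matrix (Fin n) (Fin n) ℝ}

lemma bil_comm (hH : H.IsHermitian) (a b : Fin n → ℝ) :
    a ⬝ᵥ H.mulVec b = b ⬝ᵥ H.mulVec a := by
  rw [dotProduct_mulVec, ← mulVec_transpose, ← conjTranspose_eq_transpose_of_trivial,
    hH.eq, dotProduct_comm]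

lemma q_nonneg (hH : H.PosDef) (a : Fin n → ℝ) : 0 ≤ normHsq H a := by
  simpa [normHsq] using hH.posSemidef.dotProduct_mulVec_nonneg a

lemma q_pos (hH : H.PosDef) {a : Fin n → ℝ} (ha : a ≠ 0) : 0 < normHsq H a := by
  simpa [normHsq] using hH.dotProduct_mulVec_pos ha

lemma q_add (hH : H.IsHermitian) (a b : Fin n → ℝ) :
    normHsq H (a + b) = normHsq H a + 2 * (a ⬝ᵥ H.mulVec b) + normHsq H b := by
  simp only [normHsq, mulVec_add, dotProduct_add, add_dotProduct]
  rw [bil_comm hH b a]; ring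

lemma q_smul (t : ℝ) (a : Fin n → ℝ) :
    normHsq H (t • a) = t ^ 2 * normHsq H a := by
  simp only [normHsq, mulVec_smul, dotProduct_smul, smul_dotProduct, smul_eq_mul]
  ring

lemma bil_smul (t : ℝ) (a b : Fin n → ℝ) :
    a ⬝ᵥ H.mulVec (t • b) = t * (a ⬝ᵥ H.mulVec b) := by
  simp only [mulVec_smul, dotProduct_smul, smul_eq_mul]

/-- If `0 ≤ 2 t b + t² Q` for all `|t| ≤ δ`, then `b = 0`. -/
lemma deriv_zero {b Q δ : ℝ} (hQ : 0 ≤ Q) (hδ : 0 < δ)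
    (h : ∀ t : ℝ, |t| ≤ δ → 0 ≤ 2 * t * b + t ^ 2 * Q) : b = 0 := by
  by_contra hb
  have hb2 : 0 < |b| := abs_pos.mpr hb
  set m : ℝ := min (δ / (|b| + 1)) (1 / (Q + 1)) with hm
  have hm0 : 0 < m := lt_min (by positivity) (by positivity)
  have ht : |(-b * m)| ≤ δ := by
    rw [abs_mul, abs_neg, abs_of_pos hm0]
    calc |b| * m ≤ |b| * (δ / (|b| + 1)) :=
          mul_le_mul_of_nonneg_left (min_le_left _ _) (abs_nonneg b)
      _ ≤ δ := by
          rw [mul_comm, div_mul_eq_mul_div, div_le_iff₀ (by positivity)]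
          nlinarith [abs_nonneg b, hδ.le]
  have h2 := h _ ht
  have hmQ : m * Q ≤ 1 := by
    have h3 : m * Q ≤ (1 / (Q + 1)) * Q :=
      mul_le_mul_of_nonneg_right (min_le_right _ _) hQ
    have h4 : (1 / (Q + 1)) * Q ≤ 1 := by
      rw [one_div, inv_mul_le_iff₀ (by positivity)]; linarith
    linarith
  have hbm : 0 < b ^ 2 * m := by positivity
  have he : 2 * (-b * m) * b + (-b * m) ^ 2 * Q = b ^ 2 * m * (m * Q - 2) := by ring
  rw [he] at h2
  have : b ^ 2 * m * (m * Q - 2) < 0 := mul_neg_of_pos_of_neg hbm (by linarith)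
  linarith

/-- If `0 ≤ 2 t b + t² Q` for all `t ≤ 0`, then `b ≤ 0`. -/
lemma deriv_nonpos {b Q : ℝ} (hQ : 0 ≤ Q)
    (h : ∀ t : ℝ, t ≤ 0 → 0 ≤ 2 * t * b + t ^ 2 * Q) : b ≤ 0 := by
  by_contra hb
  push_neg at hb
  have h2 := h (-b / (Q + 1)) (by
    rw [neg_div]
    have : 0 < b / (Q + 1) := by positivity
    linarith)
  have hQ1 : (0:ℝ) < Q + 1 := by positivity
  have he : 2 * (-b / (Q + 1)) * b + (-b / (Q + 1)) ^ 2 * Q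
      = (b ^ 2 / (Q + 1) ^ 2) * (Q - 2 * (Q + 1)) := by field_simp; ring
  rw [he] at h2
  have hneg : (b ^ 2 / (Q + 1) ^ 2) * (Q - 2 * (Q + 1)) < 0 :=
    mul_neg_of_pos_of_neg (by positivity) (by linarith)
  linarith

lemma q_continuous : Continuous (normHsq H) := by
  have he : (normHsq H) = fun x : Fin n → ℝ => ∑ i, x i * ∑ j, H i j * x j := by
    funext x; simp [normHsq, dotProduct, Matrix.mulVec]
  rw [he]
  exact continuous_finset_sum _ fun i _ =>
    (continuous_apply i).mul (continuous_finset_sum _ fun j _ =>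
      continuous_const.mul (continuous_apply j))

/-- Coercivity bound from positive definiteness. -/
lemma posdef_bound (hn : 1 ≤ n) (hH : H.PosDef) :
    ∃ μ > 0, ∀ x : Fin n → ℝ, μ * ‖x‖ ^ 2 ≤ normHsq H x := by
  haveI : Nonempty (Fin n) := ⟨⟨0, hn⟩⟩
  have hc : Continuous (normHsq H) := q_continuous
  have hx0 : (fun _ : Fin n => (1:ℝ)) ∈ Metric.sphere (0 : Fin n → ℝ) 1 := by
    rw [mem_sphere_zero_iff_norm]
    rw [show (fun _ : Fin n => (1:ℝ)) = (1 : Fin n → ℝ) from rfl]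
    simp
  obtain ⟨u, hu, humin⟩ := (isCompact_sphere (0 : Fin n → ℝ) 1).exists_isMinOn
    ⟨_, hx0⟩ hc.continuousOn
  have hu1 : ‖u‖ = 1 := mem_sphere_zero_iff_norm.mp hu
  have hune : u ≠ 0 := by intro h; rw [h] at hu1; simp at hu1
  refine ⟨normHsq H u, q_pos hH hune, fun x => ?_⟩
  rcases eq_or_ne x 0 with rfl | hx
  · simp [normHsq]
  · have hr : (0:ℝ) < ‖x‖ := norm_pos_iff.mpr hx
    have hmem : ‖x‖⁻¹ • x ∈ Metric.sphere (0 : Fin n → ℝ) 1 := by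
      simp [mem_sphere_zero_iff_norm, norm_smul, abs_of_pos (inv_pos.mpr hr),
        inv_mul_cancel₀ hr.ne']
    have h1 : normHsq H u ≤ normHsq H (‖x‖⁻¹ • x) := humin hmem
    rw [q_smul] at h1
    have h2 : (‖x‖⁻¹) ^ 2 = (‖x‖ ^ 2)⁻¹ := by
      rw [inv_pow]
    rw [h2] at h1
    have hr2 : (0:ℝ) < ‖x‖ ^ 2 := by positivity
    calc normHsq H u * ‖x‖ ^ 2 ≤ ((‖x‖ ^ 2)⁻¹ * normHsq H x) * ‖x‖ ^ 2 :=
          mul_le_mul_of_nonneg_right h1 hr2.le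
      _ = normHsq H x := by field_simp

end Stmt6Aux

/-- Combinatorial reduction of the FPPE limit quadratic program: for
each `S ⊆ I₀` let `hS S` be the minimizer of `h ↦ ‖h + H⁻¹ξ‖_H²` over the subspace
`{h : h_i = 0, i ∈ I₊ ∪ S}` (when `I₊ ∪ S` is everything the only feasible point is `0`,
realizing the convention `h_S = 0`). Call `S` feasible if `(hS S)_i ≤ 0` for all `i ∈ I₀`.
Then a feasible `S*` minimizing the value `Q_S` among feasible subsets exists, and for any
such `S*`, `hS S*` is the unique minimizer over the cone
`{h : h_i = 0 on I₊, h_i ≤ 0 on I₀}`. -/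
theorem stmt6 {n : ℕ} (hn : 1 ≤ n)
    (H : Matrix (Fin n) (Fin n) ℝ) (hH : H.PosDef)
    (ξ : Fin n → ℝ)
    (Iplus Izero : Finset (Fin n)) (hdisj : Disjoint Iplus Izero)
    (hS : Finset (Fin n) → (Fin n → ℝ))
    (hS_mem : ∀ S ⊆ Izero, ∀ i ∈ Iplus ∪ S, hS S i = 0)
    (hS_min : ∀ S ⊆ Izero, ∀ y : Fin n → ℝ, (∀ i ∈ Iplus ∪ S, y i = 0) →
      normHsq H (hS S + H⁻¹.mulVec ξ) ≤ normHsq H (y + H⁻¹.mulVec ξ)) :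
    (∃ Sstar ⊆ Izero,
      (∀ i ∈ Izero, hS Sstar i ≤ 0) ∧
      ∀ S ⊆ Izero, (∀ i ∈ Izero, hS S i ≤ 0) →
        normHsq H (hS Sstar + H⁻¹.mulVec ξ) ≤ normHsq H (hS S + H⁻¹.mulVec ξ)) ∧
    ∀ Sstar ⊆ Izero,
      ((∀ i ∈ Izero, hS Sstar i ≤ 0) ∧
       (∀ S ⊆ Izero, (∀ i ∈ Izero, hS S i ≤ 0) →
         normHsq H (hS Sstar + H⁻¹.mulVec ξ) ≤ normHsq H (hS S + H⁻¹.mulVec ξ))) →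
      ((∀ i ∈ Iplus, hS Sstar i = 0) ∧
       (∀ y : Fin n → ℝ, (∀ i ∈ Iplus, y i = 0) → (∀ i ∈ Izero, y i ≤ 0) →
         normHsq H (hS Sstar + H⁻¹.mulVec ξ) ≤ normHsq H (y + H⁻¹.mulVec ξ)) ∧
       (∀ y : Fin n → ℝ, (∀ i ∈ Iplus, y i = 0) → (∀ i ∈ Izero, y i ≤ 0) →
         normHsq H (y + H⁻¹.mulVec ξ) = normHsq H (hS Sstar + H⁻¹.mulVec ξ) →
         y = hS Sstar)) := by
  classical
  open Stmt6Aux in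
  set c : Fin n → ℝ := H⁻¹.mulVec ξ with hcdef
  have hherm := hH.1
  -- quadratic expansion around a point with vanishing gradient off `T`
  have expand' : ∀ (x : Fin n → ℝ) (T : Finset (Fin n)),
      (∀ j, j ∉ T → H.mulVec (x + c) j = 0) → ∀ y : Fin n → ℝ,
      normHsq H (y + c) = normHsq H (x + c)
        + 2 * ∑ j ∈ T, H.mulVec (x + c) j * (y j - x j) + normHsq H (y - x) := by
    intro x T hg y
    have h1 : y + c = (x + c) + (y - x) := by abel
    rw [h1, Stmt6Aux.q_add hherm]
    have h3 : (x + c) ⬝ᵥ H.mulVec (y - x) = ∑ j, H.mulVec (x + c) j * (y j - x j) := by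
      rw [Stmt6Aux.bil_comm hherm]
      simp only [dotProduct, Pi.sub_apply]
      exact Finset.sum_congr rfl fun j _ => mul_comm _ _
    have h4 : ∑ j ∈ T, H.mulVec (x + c) j * (y j - x j)
        = ∑ j, H.mulVec (x + c) j * (y j - x j) := by
      refine Finset.sum_subset (Finset.subset_univ T) fun j _ hj => ?_
      rw [hg j hj, zero_mul]
    rw [h3, h4]
  -- perturbation lemmas
  have perturb : ∀ (x : Fin n → ℝ) (j : Fin n) (δ : ℝ), 0 < δ →
      (∀ t : ℝ, |t| ≤ δ → normHsq H (x + c) ≤ normHsq H ((x + t • (Pi.single j 1 : Fin n → ℝ)) + c)) →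
      H.mulVec (x + c) j = 0 := by
    intro x j δ hδ hmin
    have key : ∀ t : ℝ, |t| ≤ δ →
        0 ≤ 2 * t * ((x + c) ⬝ᵥ H.mulVec (Pi.single j 1))
          + t ^ 2 * normHsq H (Pi.single j 1) := by
      intro t ht
      have h1 := hmin t ht
      have h2 : normHsq H ((x + t • (Pi.single j 1 : Fin n → ℝ)) + c)
          = normHsq H (x + c) + 2 * (t * ((x + c) ⬝ᵥ H.mulVec (Pi.single j 1)))
            + t ^ 2 * normHsq H (Pi.single j 1) := by
        rw [show (x + t • (Pi.single j 1 : Fin n → ℝ)) + c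
            = (x + c) + t • (Pi.single j 1 : Fin n → ℝ) by abel,
          Stmt6Aux.q_add hherm (x + c) (t • (Pi.single j 1 : Fin n → ℝ)),
          Stmt6Aux.bil_smul, Stmt6Aux.q_smul]
      rw [h2] at h1
      linarith
    have hb := Stmt6Aux.deriv_zero (Stmt6Aux.q_nonneg hH _) hδ key
    rwa [Stmt6Aux.bil_comm hherm, single_dotProduct, one_mul] at hb
  have perturbs : ∀ (x : Fin n → ℝ) (j : Fin n),
      (∀ t : ℝ, t ≤ 0 → normHsq H (x + c) ≤ normHsq H ((x + t • (Pi.single j 1 : Fin n → ℝ)) + c)) →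
      H.mulVec (x + c) j ≤ 0 := by
    intro x j hmin
    have key : ∀ t : ℝ, t ≤ 0 →
        0 ≤ 2 * t * ((x + c) ⬝ᵥ H.mulVec (Pi.single j 1))
          + t ^ 2 * normHsq H (Pi.single j 1) := by
      intro t ht
      have h1 := hmin t ht
      have h2 : normHsq H ((x + t • (Pi.single j 1 : Fin n → ℝ)) + c)
          = normHsq H (x + c) + 2 * (t * ((x + c) ⬝ᵥ H.mulVec (Pi.single j 1)))
            + t ^ 2 * normHsq H (Pi.single j 1) := by
        rw [show (x + t • (Pi.single j 1 : Fin n → ℝ)) + c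
            = (x + c) + t • (Pi.single j 1 : Fin n → ℝ) by abel,
          Stmt6Aux.q_add hherm (x + c) (t • (Pi.single j 1 : Fin n → ℝ)),
          Stmt6Aux.bil_smul, Stmt6Aux.q_smul]
      rw [h2] at h1
      linarith
    have hb := Stmt6Aux.deriv_nonpos (Stmt6Aux.q_nonneg hH _) key
    rwa [Stmt6Aux.bil_comm hherm, single_dotProduct, one_mul] at hb
  -- the cone and existence of a minimizer over it
  obtain ⟨μ, hμ, hcoer⟩ := Stmt6Aux.posdef_bound hn hH
  set K : Set (Fin n → ℝ) := {y | (∀ i ∈ Iplus, y i = 0) ∧ ∀ i ∈ Izero, y i ≤ 0} with hKdef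
  have hKclosed : IsClosed K := by
    have hKeq : K = (⋂ i ∈ Iplus, {y : Fin n → ℝ | y i = 0})
        ∩ ⋂ i ∈ Izero, {y : Fin n → ℝ | y i ≤ 0} := by
      ext y; simp [hKdef, Set.mem_iInter]
    rw [hKeq]
    exact IsClosed.inter
      (isClosed_biInter fun i _ => isClosed_eq (continuous_apply i) continuous_const)
      (isClosed_biInter fun i _ => isClosed_le (continuous_apply i) continuous_const)
  have h0K : (0 : Fin n → ℝ) ∈ K := ⟨fun i _ => rfl, fun i _ => le_rfl⟩
  have hfc : Continuous (fun y : Fin n → ℝ => normHsq H (y + c)) :=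
    Stmt6Aux.q_continuous.comp (continuous_id.add continuous_const)
  have hev : ∀ᶠ x in Filter.cocompact (Fin n → ℝ),
      normHsq H ((0 : Fin n → ℝ) + c) ≤ normHsq H (x + c) := by
    set s : ℝ := Real.sqrt (normHsq H ((0 : Fin n → ℝ) + c) / μ) with hsdef
    have hs0 : 0 ≤ s := Real.sqrt_nonneg _
    have hs2 : s ^ 2 = normHsq H ((0 : Fin n → ℝ) + c) / μ :=
      Real.sq_sqrt (div_nonneg (Stmt6Aux.q_nonneg hH _) hμ.le)
    refine Filter.hasBasis_cocompact.eventually_iff.2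
      ⟨Metric.closedBall 0 (‖c‖ + s + 1), isCompact_closedBall _ _, fun x hx => ?_⟩
    have hxR : ‖c‖ + s + 1 < ‖x‖ := by
      by_contra hle
      exact hx (Metric.mem_closedBall.mpr (by rw [dist_zero_right]; exact not_lt.mp hle))
    have h1 : ‖x‖ ≤ ‖x + c‖ + ‖c‖ := by
      simpa [add_neg_cancel_right] using norm_add_le (x + c) (-c)
    have hnorm : s + 1 ≤ ‖x + c‖ := by linarith
    have hcoe := hcoer (x + c)
    have h2 : μ * (s + 1) ^ 2 ≤ μ * ‖x + c‖ ^ 2 :=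
      mul_le_mul_of_nonneg_left (pow_le_pow_left₀ (by positivity) hnorm 2) hμ.le
    have h3 : normHsq H ((0 : Fin n → ℝ) + c) = μ * s ^ 2 := by
      rw [hs2]; field_simp
    nlinarith [mul_nonneg hμ.le hs0]
  obtain ⟨ystar, hyK, hymin'⟩ :=
    hfc.continuousOn.exists_isMinOn' hKclosed h0K (hev.filter_mono inf_le_left)
  have hymin : ∀ y ∈ K, normHsq H (ystar + c) ≤ normHsq H (y + c) :=
    fun y hy => hymin' hy
  have hyplus : ∀ i ∈ Iplus, ystar i = 0 := hyK.1
  have hyzero : ∀ i ∈ Izero, ystar i ≤ 0 := hyK.2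
  -- active set of the cone minimizer
  set S0 : Finset (Fin n) := Izero.filter (fun i => ystar i = 0) with hS0def
  have hS0sub : S0 ⊆ Izero := Finset.filter_subset _ _
  have gradstar : ∀ j, j ∉ Iplus ∪ S0 → H.mulVec (ystar + c) j = 0 := by
    intro j hj
    have hjp : j ∉ Iplus := fun h => hj (Finset.mem_union_left _ h)
    by_cases hjz : j ∈ Izero
    · have hjne : ystar j ≠ 0 := fun h =>
        hj (Finset.mem_union_right _ (Finset.mem_filter.mpr ⟨hjz, h⟩))
      have hjlt : ystar j < 0 := lt_of_le_of_ne (hyzero j hjz) hjne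
      refine perturb ystar j (-ystar j) (by linarith) fun t ht => ?_
      refine hymin _ ⟨fun i hi => ?_, fun i hi => ?_⟩
      · have hij : i ≠ j := fun h => hjp (h ▸ hi)
        simp [hyplus i hi, Pi.single_eq_of_ne hij]
      · rcases eq_or_ne i j with rfl | hij
        · simp only [Pi.add_apply, Pi.smul_apply, Pi.single_eq_same, smul_eq_mul, mul_one]
          have h5 := (abs_le.mp ht).2
          linarith
        · simp [Pi.single_eq_of_ne hij, hyzero i hi]
    · refine perturb ystar j 1 one_pos fun t ht => ?_
      refine hymin _ ⟨fun i hi => ?_, fun i hi => ?_⟩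
      · have hij : i ≠ j := fun h => hjp (h ▸ hi)
        simp [hyplus i hi, Pi.single_eq_of_ne hij]
      · have hij : i ≠ j := fun h => hjz (h ▸ hi)
        simp [Pi.single_eq_of_ne hij, hyzero i hi]
  have gradsign : ∀ j ∈ S0, H.mulVec (ystar + c) j ≤ 0 := by
    intro j hj
    obtain ⟨hjz, hj0⟩ := Finset.mem_filter.mp hj
    have hjp : j ∉ Iplus := fun h => (Finset.disjoint_left.mp hdisj h) hjz
    refine perturbs ystar j fun t ht => ?_
    refine hymin _ ⟨fun i hi => ?_, fun i hi => ?_⟩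
    · have hij : i ≠ j := fun h => hjp (h ▸ hi)
      simp [hyplus i hi, Pi.single_eq_of_ne hij]
    · rcases eq_or_ne i j with rfl | hij
      · simp only [Pi.add_apply, Pi.smul_apply, Pi.single_eq_same, smul_eq_mul, mul_one, hj0]
        linarith
      · simp [Pi.single_eq_of_ne hij, hyzero i hi]
  -- the cone minimizer is `hS S0`
  have hy0 : ∀ i ∈ Iplus ∪ S0, ystar i = 0 := by
    intro i hi
    rcases Finset.mem_union.mp hi with h | h
    · exact hyplus i h
    · exact (Finset.mem_filter.mp h).2
  have hle1 : normHsq H (hS S0 + c) ≤ normHsq H (ystar + c) := hS_min S0 hS0sub ystar hy0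
  have hyeq : hS S0 = ystar := by
    have hexp := expand' ystar (Iplus ∪ S0) gradstar (hS S0)
    have hsum0 : ∑ j ∈ Iplus ∪ S0, H.mulVec (ystar + c) j * (hS S0 j - ystar j) = 0 :=
      Finset.sum_eq_zero fun j hj => by rw [hS_mem S0 hS0sub j hj, hy0 j hj]; ring
    rw [hsum0] at hexp
    have hq0 : normHsq H (hS S0 - ystar) ≤ 0 := by linarith
    by_contra hne
    exact absurd hq0 (not_le.mpr (Stmt6Aux.q_pos hH (sub_ne_zero_of_ne hne)))
  have hS0feas : ∀ i ∈ Izero, hS S0 i ≤ 0 := fun i hi => by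
    rw [hyeq]; exact hyzero i hi
  -- uniqueness of the cone minimizer
  have hunique : ∀ z ∈ K, normHsq H (z + c) = normHsq H (ystar + c) → z = ystar := by
    intro z hz hzeq
    have hexp2 := expand' ystar (Iplus ∪ S0) gradstar z
    have hsumnn : 0 ≤ ∑ j ∈ Iplus ∪ S0, H.mulVec (ystar + c) j * (z j - ystar j) := by
      refine Finset.sum_nonneg fun j hj => ?_
      rcases Finset.mem_union.mp hj with h | h
      · rw [hz.1 j h, hyplus j h]; simp
      · have hjz := (Finset.mem_filter.mp h).1
        rw [(Finset.mem_filter.mp h).2, sub_zero]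
        have := gradsign j h
        have := hz.2 j hjz
        nlinarith
    have hq2 : normHsq H (z - ystar) ≤ 0 := by linarith
    by_contra hne
    exact absurd hq2 (not_le.mpr (Stmt6Aux.q_pos hH (sub_ne_zero_of_ne hne)))
  -- Part 1: existence of an optimal feasible subset
  have hIzfeas : ∀ i ∈ Izero, hS Izero i ≤ 0 := fun i hi =>
    le_of_eq (hS_mem Izero Finset.Subset.rfl i (Finset.mem_union_right _ hi))
  obtain ⟨Sm, hSmF, hSmmin⟩ :=
    ((Izero.powerset).filter (fun S => ∀ i ∈ Izero, hS S i ≤ 0)).exists_min_image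
      (fun S => normHsq H (hS S + c))
      ⟨Izero, Finset.mem_filter.mpr ⟨Finset.mem_powerset_self _, hIzfeas⟩⟩
  obtain ⟨hSmP, hSmfeas⟩ := Finset.mem_filter.mp hSmF
  constructor
  · exact ⟨Sm, Finset.mem_powerset.mp hSmP, hSmfeas, fun S hsub hfe =>
      hSmmin S (Finset.mem_filter.mpr ⟨Finset.mem_powerset.mpr hsub, hfe⟩)⟩
  -- Part 2
  rintro Sstar hsub ⟨hfeas, hopt⟩
  have hzplus : ∀ i ∈ Iplus, hS Sstar i = 0 := fun i hi =>
    hS_mem Sstar hsub i (Finset.mem_union_left _ hi)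
  have hstarK : hS Sstar ∈ K := ⟨hzplus, hfeas⟩
  have h1 : normHsq H (hS Sstar + c) ≤ normHsq H (ystar + c) := by
    have := hopt S0 hS0sub hS0feas
    rwa [hyeq] at this
  have h2 : normHsq H (ystar + c) ≤ normHsq H (hS Sstar + c) := hymin _ hstarK
  have heq : normHsq H (hS Sstar + c) = normHsq H (ystar + c) := le_antisymm h1 h2
  refine ⟨hzplus, fun y hy1 hy2 => ?_, fun y hy1 hy2 hy3 => ?_⟩
  · rw [heq]; exact hymin y ⟨hy1, hy2⟩
  · have hy' : y = ystar := hunique y ⟨hy1, hy2⟩ (by rw [hy3, heq])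
    have hstar' : hS Sstar = ystar := hunique _ hstarK heq
    rw [hy', hstar']
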